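/- There exists a constant C > 0 such that with high probability the independence number of G(n, (3γ·ln n)/(4n)) is at least C·n·ln(ln n)/ln n. -/

import Mathlib

open MeasureTheory Filter

/-- Index type for potential edges of a graph on `Fin n`: ordered pairs `(i,j)` with `i < j`. -/
abbrev EdgeIdx (n : ℕ) := {e : Fin n × Fin n // e.1 < e.2}

/-- Bernoulli measure on `Bool` with success probability `p` (clamped to `[0,1]`). -/
noncomputable def bern (p : ℝ) : Measure Bool :=
  (PMF.bernoulli (min (Real.toNNReal p) 1) (min_le_right _ _)).toMeasure

instance (p : ℝ) : IsProbabilityMeasure (bern p) := by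
  unfold bern; infer_instance

/-- The Erdős–Rényi random graph `G(n,p)`: each potential edge present
independently with probability `p`. -/
noncomputable def gnp (n : ℕ) (p : ℝ) : Measure (EdgeIdx n → Bool) :=
  Measure.pi fun _ => bern p

/-- Adjacency of `i` and `j` in the sampled graph `ω`. -/
def adjB {n : ℕ} (ω : EdgeIdx n → Bool) (i j : Fin n) : Bool :=
  if h : i < j then ω ⟨(i, j), h⟩ else if h' : j < i then ω ⟨(j, i), h'⟩ else false

/-- The number of triangles (3-sets of pairwise adjacent vertices) in the sampled graph. -/
def triangleCount (n : ℕ) (ω : EdgeIdx n → Bool) : ℕ :=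
  (Finset.univ.filter fun t : Fin n × Fin n × Fin n =>
    t.1 < t.2.1 ∧ t.2.1 < t.2.2 ∧ adjB ω t.1 t.2.1 = true ∧ adjB ω t.1 t.2.2 = true ∧
      adjB ω t.2.1 t.2.2 = true).card


/-- The independence number of the sampled graph: the largest size of a set of
pairwise non-adjacent vertices. -/
noncomputable def sampleIndepNum (n : ℕ) (ω : EdgeIdx n → Bool) : ℕ :=
  sSup {k | ∃ s : Finset (Fin n), s.card = k ∧ ∀ i ∈ s, ∀ j ∈ s, adjB ω i j = false}

lemma adjB_comm {n : ℕ} (ω : EdgeIdx n → Bool) (i j : Fin n) : adjB ω i j = adjB ω j i := by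
  unfold adjB
  rcases lt_trichotomy i j with h | h | h
  · rw [dif_pos h, dif_neg (not_lt.2 h.le), dif_pos h]
  · simp [h]
  · rw [dif_neg (not_lt.2 h.le), dif_pos h, dif_pos h]

lemma adjB_self {n : ℕ} (ω : EdgeIdx n → Bool) (i : Fin n) : adjB ω i i = false := by
  unfold adjB; simp

/-- greedy independent set after scanning vertices `0..i-1`. -/
def greedy {n : ℕ} (ω : EdgeIdx n → Bool) : ℕ → Finset (Fin n)
  | 0 => ∅
  | (i+1) =>
    if h : i < n then
      (if ∀ j ∈ greedy ω i, adjB ω ⟨i, h⟩ j = false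
        then insert ⟨i, h⟩ (greedy ω i) else greedy ω i)
    else greedy ω i

/-- whether vertex `i` was added at step `i`. -/
def stepSucc {n : ℕ} (ω : EdgeIdx n → Bool) (i : ℕ) : Prop :=
  ∃ h : i < n, ∀ j ∈ greedy ω i, adjB ω ⟨i, h⟩ j = false

instance {n : ℕ} (ω : EdgeIdx n → Bool) (i : ℕ) : Decidable (stepSucc ω i) :=
  if h : i < n then
    decidable_of_iff (∀ j ∈ greedy ω i, adjB ω ⟨i, h⟩ j = false)
      ⟨fun hx => ⟨h, hx⟩, fun ⟨_, hx⟩ => hx⟩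
  else isFalse (fun ⟨h', _⟩ => h h')

lemma greedy_succ {n : ℕ} (ω : EdgeIdx n → Bool) (i : ℕ) :
    greedy ω (i+1) = (if h : i < n then
      (if ∀ j ∈ greedy ω i, adjB ω ⟨i, h⟩ j = false
        then insert ⟨i, h⟩ (greedy ω i) else greedy ω i)
    else greedy ω i) := rfl

lemma greedy_lt {n : ℕ} (ω : EdgeIdx n → Bool) (i : ℕ) :
    ∀ j ∈ greedy ω i, (j : ℕ) < i := by
  induction i with
  | zero => simp [greedy]
  | succ i ih =>
    intro j hj
    rw [greedy_succ] at hj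
    split_ifs at hj with h1 h2
    · rcases Finset.mem_insert.1 hj with h | h
      · simp [h]
      · exact (ih j h).trans (Nat.lt_succ_self i)
    · exact (ih j hj).trans (Nat.lt_succ_self i)
    · exact (ih j hj).trans (Nat.lt_succ_self i)

lemma greedy_indep {n : ℕ} (ω : EdgeIdx n → Bool) (i : ℕ) :
    ∀ a ∈ greedy ω i, ∀ b ∈ greedy ω i, adjB ω a b = false := by
  induction i with
  | zero => simp [greedy]
  | succ i ih =>
    intro a ha b hb
    rw [greedy_succ] at ha hb
    split_ifs at ha hb with h1 h2
    · rcases Finset.mem_insert.1 ha with ha' | ha' <;>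
        rcases Finset.mem_insert.1 hb with hb' | hb'
      · rw [ha', hb']; exact adjB_self ω _
      · rw [ha']; exact h2 b hb'
      · rw [hb', adjB_comm]; exact h2 a ha'
      · exact ih a ha' b hb'
    · exact ih a ha b hb
    · exact ih a ha b hb

lemma greedy_succ_card {n : ℕ} (ω : EdgeIdx n → Bool) (i : ℕ) :
    (greedy ω (i+1)).card = (greedy ω i).card + (if stepSucc ω i then 1 else 0) := by
  rw [greedy_succ]
  unfold stepSucc
  split_ifs with h1 h2 h3 h3 h4
  · rw [Finset.card_insert_of_notMem]
    · simp [h3]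
    intro hmem
    exact absurd (greedy_lt ω i _ hmem) (by simp)
  · exact absurd ⟨h1, h2⟩ h3
  · obtain ⟨_, h⟩ := h3; exact absurd h h2
  · simp [h3]
  · obtain ⟨h, _⟩ := h4; exact absurd h h1
  · simp [h4]

lemma greedy_card_le {n : ℕ} (ω : EdgeIdx n → Bool) {i j : ℕ} (h : i ≤ j) :
    (greedy ω i).card ≤ (greedy ω j).card := by
  induction j, h using Nat.le_induction with
  | base => exact le_refl _
  | succ j hij ih => rw [greedy_succ_card]; omega

lemma greedy_card_eq_sum {n : ℕ} (ω : EdgeIdx n → Bool) (m : ℕ) :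
    (greedy ω m).card = ∑ i ∈ Finset.range m, (if stepSucc ω i then 1 else 0) := by
  induction m with
  | zero => simp [greedy]
  | succ m ih => rw [Finset.sum_range_succ, greedy_succ_card, ih]

lemma adjB_of_lt {n : ℕ} (ω : EdgeIdx n → Bool) {i j : Fin n} (h : j < i) :
    adjB ω i j = ω ⟨(j, i), h⟩ := by
  unfold adjB
  rw [dif_neg (not_lt.2 h.le), dif_pos h]

lemma greedy_congr {n : ℕ} {ω ω' : EdgeIdx n → Bool} (i : ℕ)
    (hag : ∀ e : EdgeIdx n, (e.1.2 : ℕ) < i → ω e = ω' e) :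
    greedy ω i = greedy ω' i := by
  induction i with
  | zero => rfl
  | succ i ih =>
    have hag' : ∀ e : EdgeIdx n, (e.1.2 : ℕ) < i → ω e = ω' e :=
      fun e he => hag e (he.trans (Nat.lt_succ_self i))
    have hgi : greedy ω i = greedy ω' i := ih hag'
    rw [greedy_succ, greedy_succ, hgi]
    by_cases h : i < n
    · rw [dif_pos h, dif_pos h]
      have key : (∀ j ∈ greedy ω' i, adjB ω ⟨i, h⟩ j = false) ↔
          (∀ j ∈ greedy ω' i, adjB ω' ⟨i, h⟩ j = false) := by
        apply forall₂_congr
        intro j hj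
        have hji : j < (⟨i, h⟩ : Fin n) := greedy_lt ω' i j hj
        rw [adjB_of_lt ω hji, adjB_of_lt ω' hji,
          hag ⟨(j, ⟨i, h⟩), hji⟩ (Nat.lt_succ_self i)]
      rw [if_congr key rfl rfl]
    · rw [dif_neg h, dif_neg h]

lemma stepSucc_congr {n : ℕ} {ω ω' : EdgeIdx n → Bool} (i : ℕ)
    (hag : ∀ e : EdgeIdx n, (e.1.2 : ℕ) ≤ i → ω e = ω' e) :
    stepSucc ω i ↔ stepSucc ω' i := by
  have hag' : ∀ e : EdgeIdx n, (e.1.2 : ℕ) < i → ω e = ω' e :=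
    fun e he => hag e he.le
  have hgi : greedy ω i = greedy ω' i := greedy_congr i hag'
  unfold stepSucc
  rw [hgi]
  apply exists_congr
  intro h
  apply forall₂_congr
  intro j hj
  have hji : j < (⟨i, h⟩ : Fin n) := greedy_lt ω' i j hj
  rw [adjB_of_lt ω hji, adjB_of_lt ω' hji, hag ⟨(j, ⟨i, h⟩), hji⟩ (le_refl i)]

lemma greedy_card_le_indep (n : ℕ) (ω : EdgeIdx n → Bool) :
    (greedy ω n).card ≤ sampleIndepNum n ω := by
  apply le_csSup
  · refine ⟨n, fun k hk => ?_⟩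
    obtain ⟨s, hs, _⟩ := hk
    rw [← hs]
    simpa using s.card_le_univ
  · exact ⟨greedy ω n, rfl, greedy_indep ω n⟩

noncomputable def bw (P : ℝ) (b : Bool) : ℝ := if b then P else 1 - P

noncomputable def BW {n : ℕ} (P : ℝ) (ω : EdgeIdx n → Bool) : ℝ := ∏ e, bw P (ω e)

lemma bw_nonneg {P : ℝ} (h0 : 0 ≤ P) (h1 : P ≤ 1) (b : Bool) : 0 ≤ bw P b := by
  unfold bw; cases b <;> simp <;> linarith

lemma BW_nonneg {n : ℕ} {P : ℝ} (h0 : 0 ≤ P) (h1 : P ≤ 1) (ω : EdgeIdx n → Bool) :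
    0 ≤ BW P ω :=
  Finset.prod_nonneg fun e _ => bw_nonneg h0 h1 _

lemma bern_singleton {p : ℝ} (h0 : 0 ≤ p) (h1 : p ≤ 1) (b : Bool) :
    bern p {b} = ENNReal.ofReal (bw p b) := by
  unfold bern
  rw [PMF.toMeasure_apply_singleton _ _ (measurableSet_singleton b)]
  have hmin : min (Real.toNNReal p) 1 = Real.toNNReal p := by
    rw [min_eq_left]
    exact Real.toNNReal_le_one.2 h1
  cases b
  · simp only [PMF.bernoulli_apply, hmin, bw, cond]
    change (1:ENNReal) - ENNReal.ofReal p = _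
    rw [← ENNReal.ofReal_one, ← ENNReal.ofReal_sub _ h0]
    norm_num
  · simp only [PMF.bernoulli_apply, hmin, bw, cond]; rfl

instance msc (n : ℕ) : MeasurableSingletonClass (EdgeIdx n → Bool) := by
  constructor
  intro ω
  have : {ω} = Set.univ.pi (fun e => {ω e}) := (Set.univ_pi_singleton ω).symm
  rw [this]
  exact MeasurableSet.univ_pi fun e => measurableSet_singleton _

lemma meas_all {n : ℕ} (S : Set (EdgeIdx n → Bool)) : MeasurableSet S :=
  S.toFinite.measurableSet

lemma gnp_singleton {n : ℕ} {p : ℝ} (h0 : 0 ≤ p) (h1 : p ≤ 1) (ω : EdgeIdx n → Bool) :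
    gnp n p {ω} = ENNReal.ofReal (BW p ω) := by
  unfold gnp
  have : {ω} = Set.univ.pi (fun e => {ω e}) := (Set.univ_pi_singleton ω).symm
  rw [this, Measure.pi_pi]
  unfold BW
  rw [Finset.prod_congr rfl fun (e : EdgeIdx n) _ => bern_singleton h0 h1 (ω e),
    ← ENNReal.ofReal_prod_of_nonneg fun e _ => bw_nonneg h0 h1 _]

lemma gnp_apply {n : ℕ} {p : ℝ} (h0 : 0 ≤ p) (h1 : p ≤ 1) (S : Set (EdgeIdx n → Bool)) :
    gnp n p S = ENNReal.ofReal (∑ ω ∈ S.toFinite.toFinset, BW p ω) := by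
  set F := S.toFinite.toFinset with hF
  have hS : S = ⋃ ω ∈ F, {ω} := by
    ext x; simp [hF]
  rw [hS, measure_biUnion_finset ?_ (fun ω _ => meas_all _)]
  · rw [ENNReal.ofReal_sum_of_nonneg fun ω _ => BW_nonneg h0 h1 ω]
    exact Finset.sum_congr rfl fun ω _ => gnp_singleton h0 h1 ω
  · intro a _ b _ hab
    simp [Function.onFun, Set.disjoint_singleton, hab]

lemma sum_prod_bool {ι : Type*} [Fintype ι] [DecidableEq ι] (f : ι → Bool → ℝ) :
    ∑ g : ι → Bool, ∏ i, f i (g i) = ∏ i, (f i true + f i false) := by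
  rw [← Fintype.prod_sum f]
  exact Finset.prod_congr rfl fun i _ => Fintype.sum_bool _

lemma sum_prod_bw {ι : Type*} [Fintype ι] [DecidableEq ι] (P : ℝ) :
    ∑ g : ι → Bool, ∏ i, bw P (g i) = 1 := by
  rw [sum_prod_bool]
  simp [bw]

/-- the per-step exponential factor. -/
noncomputable def Ff {n : ℕ} (k i : ℕ) (ω : EdgeIdx n → Bool) : ℝ :=
  if k ≤ (greedy ω i).card ∨ stepSucc ω i then Real.exp (-1) else 1

lemma Ff_pos {n : ℕ} (k i : ℕ) (ω : EdgeIdx n → Bool) : 0 < Ff k i ω := by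
  unfold Ff; split_ifs
  · exact Real.exp_pos _
  · norm_num

lemma Ff_le_one {n : ℕ} (k i : ℕ) (ω : EdgeIdx n → Bool) : Ff k i ω ≤ 1 := by
  unfold Ff; split_ifs
  · exact (Real.exp_le_one_iff.2 (by norm_num))
  · exact le_refl 1

lemma Ff_congr {n : ℕ} (k j : ℕ) {ω ω' : EdgeIdx n → Bool}
    (hag : ∀ e : EdgeIdx n, (e.1.2 : ℕ) ≤ j → ω e = ω' e) :
    Ff k j ω = Ff k j ω' := by
  unfold Ff
  rw [greedy_congr j fun e he => hag e he.le, if_congr (or_congr Iff.rfl (stepSucc_congr j hag)) rfl rfl]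

section Step

variable {n : ℕ}

def pd (n i : ℕ) : EdgeIdx n → Prop := fun e => ((e : Fin n × Fin n).2 : ℕ) = i

instance (i : ℕ) : DecidablePred (pd n i) := fun _ => Nat.decEq _ _

noncomputable def glue {n : ℕ} (i : ℕ) (σ : {e : EdgeIdx n // pd n i e} → Bool)
    (τ : {e : EdgeIdx n // ¬ pd n i e} → Bool) : EdgeIdx n → Bool :=
  (Equiv.piEquivPiSubtypeProd (pd n i) (fun _ => Bool)).symm (σ, τ)

lemma glue_apply {i : ℕ} (σ : {e : EdgeIdx n // pd n i e} → Bool)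
    (τ : {e : EdgeIdx n // ¬ pd n i e} → Bool) (e : EdgeIdx n) :
    glue i σ τ e = if h : pd n i e then σ ⟨e, h⟩ else τ ⟨e, h⟩ := rfl

lemma glue_pos {i : ℕ} (σ : {e : EdgeIdx n // pd n i e} → Bool)
    (τ : {e : EdgeIdx n // ¬ pd n i e} → Bool) (a : {e : EdgeIdx n // pd n i e}) :
    glue i σ τ a.1 = σ a := by
  rw [glue_apply, dif_pos a.2]

lemma glue_neg {i : ℕ} (σ : {e : EdgeIdx n // pd n i e} → Bool)
    (τ : {e : EdgeIdx n // ¬ pd n i e} → Bool) (b : {e : EdgeIdx n // ¬ pd n i e}) :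
    glue i σ τ b.1 = τ b := by
  rw [glue_apply, dif_neg b.2]

lemma sum_glue (i : ℕ) (f : (EdgeIdx n → Bool) → ℝ) :
    ∑ ω : EdgeIdx n → Bool, f ω =
      ∑ σ : {e : EdgeIdx n // pd n i e} → Bool,
        ∑ τ : {e : EdgeIdx n // ¬ pd n i e} → Bool, f (glue i σ τ) := by
  rw [← Equiv.sum_comp (Equiv.piEquivPiSubtypeProd (pd n i) (fun _ => Bool)).symm f,
    Fintype.sum_prod_type]
  rfl

lemma BW_glue (P : ℝ) {i : ℕ} (σ : {e : EdgeIdx n // pd n i e} → Bool)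
    (τ : {e : EdgeIdx n // ¬ pd n i e} → Bool) :
    BW P (glue i σ τ) = (∏ a, bw P (σ a)) * (∏ b, bw P (τ b)) := by
  unfold BW
  rw [← Fintype.prod_subtype_mul_prod_subtype (pd n i) (fun e => bw P (glue i σ τ e))]
  congr 1
  · exact Finset.prod_congr rfl fun a _ => by rw [glue_pos]
  · exact Finset.prod_congr rfl fun b _ => by rw [glue_neg]

lemma glue_agree_lt {i : ℕ} (σ σ' : {e : EdgeIdx n // pd n i e} → Bool)
    (τ : {e : EdgeIdx n // ¬ pd n i e} → Bool) {j : ℕ} (hj : j < i) :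
    ∀ e : EdgeIdx n, (e.1.2 : ℕ) ≤ j → glue i σ τ e = glue i σ' τ e := by
  intro e he
  have hne : ¬ pd n i e := by unfold pd; omega
  rw [glue_apply, glue_apply, dif_neg hne, dif_neg hne]

lemma greedy_glue {i : ℕ} (σ σ' : {e : EdgeIdx n // pd n i e} → Bool)
    (τ : {e : EdgeIdx n // ¬ pd n i e} → Bool) :
    greedy (glue i σ τ) i = greedy (glue i σ' τ) i := by
  apply greedy_congr
  intro e he
  have hne : ¬ pd n i e := by unfold pd; omega
  rw [glue_apply, glue_apply, dif_neg hne, dif_neg hne]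

lemma prefix_glue (k : ℕ) {i : ℕ} (σ σ' : {e : EdgeIdx n // pd n i e} → Bool)
    (τ : {e : EdgeIdx n // ¬ pd n i e} → Bool) :
    ∏ j ∈ Finset.range i, Ff k j (glue i σ τ) = ∏ j ∈ Finset.range i, Ff k j (glue i σ' τ) := by
  apply Finset.prod_congr rfl
  intro j hj
  exact Ff_congr k j (glue_agree_lt σ σ' τ (Finset.mem_range.1 hj))

end Step

lemma sum_bw_indicator {ι : Type*} [Fintype ι] [DecidableEq ι] {P : ℝ}
    (E₀ : Finset ι) :
    ∑ σ : ι → Bool, (∏ a, bw P (σ a)) * (if ∀ a ∈ E₀, σ a = false then (1:ℝ) else 0)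
      = (1-P)^E₀.card := by
  have key : ∀ σ : ι → Bool,
      (∏ a, bw P (σ a)) * (if ∀ a ∈ E₀, σ a = false then (1:ℝ) else 0)
        = ∏ a, (bw P (σ a) * (if a ∈ E₀ then (if σ a then 0 else 1) else 1)) := by
    intro σ
    rw [Finset.prod_mul_distrib]
    congr 1
    split_ifs with hc
    · refine (Finset.prod_eq_one fun a _ => ?_).symm
      by_cases ha : a ∈ E₀
      · rw [if_pos ha, hc a ha]; norm_num
      · rw [if_neg ha]
    · push_neg at hc
      obtain ⟨a, ha, hne⟩ := hc
      refine (Finset.prod_eq_zero (Finset.mem_univ a) ?_).symm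
      rw [if_pos ha, Bool.ne_false_iff.1 hne]; norm_num
  rw [Finset.sum_congr rfl fun σ _ => key σ,
    sum_prod_bool fun a b => bw P b * (if a ∈ E₀ then (if b then 0 else 1) else 1)]
  have : ∀ a : ι, (bw P true * (if a ∈ E₀ then (if (true:Bool) = true then (0:ℝ) else 1) else 1)
      + bw P false * (if a ∈ E₀ then (if (false:Bool) = true then (0:ℝ) else 1) else 1)) = if a ∈ E₀ then 1 - P else 1 := by
    intro a
    by_cases ha : a ∈ E₀ <;> simp [ha, bw]
  rw [Finset.prod_congr rfl fun a _ => this a, Finset.prod_ite_mem, Finset.univ_inter,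
    Finset.prod_const]

lemma inner_bound {n : ℕ} {P : ℝ} (h0 : 0 ≤ P) (h1 : P ≤ 1) (k : ℕ) {i : ℕ} (hi : i < n)
    (τ : {e : EdgeIdx n // ¬ pd n i e} → Bool) :
    ∑ σ : {e : EdgeIdx n // pd n i e} → Bool, (∏ a, bw P (σ a)) * Ff k i (glue i σ τ)
      ≤ 1 - (1 - Real.exp (-1)) * (1-P)^k := by
  have hP1 : (0:ℝ) ≤ 1 - P := by linarith
  have hP1' : (1:ℝ) - P ≤ 1 := by linarith
  have hexp : Real.exp (-1) ≤ 1 := Real.exp_le_one_iff.2 (by norm_num)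
  have hc0 : (0:ℝ) ≤ 1 - Real.exp (-1) := by linarith
  set s := greedy (glue i (fun _ => false) τ) i with hs
  have hgs : ∀ σ, greedy (glue i σ τ) i = s := fun σ => greedy_glue σ _ τ
  by_cases hks : k ≤ s.card
  · have hFf : ∀ σ, Ff k i (glue i σ τ) = Real.exp (-1) := by
      intro σ
      unfold Ff
      rw [if_pos (Or.inl (by rw [hgs σ]; exact hks))]
    rw [Finset.sum_congr rfl fun σ _ => by rw [hFf σ]]
    rw [← Finset.sum_mul, sum_prod_bw, one_mul]
    nlinarith [pow_le_one₀ hP1 hP1' (n := k)]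
  · -- the key case: success probability is (1-P)^(s.card)
    set E₀ : Finset {e : EdgeIdx n // pd n i e} :=
      Finset.univ.filter (fun a => a.1.1.1 ∈ s) with hE₀
    have hvi : ∀ v ∈ s, v < (⟨i, hi⟩ : Fin n) := by
      intro v hv
      have := greedy_lt _ i v (hs ▸ hv)
      simpa [Fin.lt_def] using this
    have hcard : E₀.card = s.card := by
      apply Finset.card_bij (fun a _ => a.1.1.1)
      · intro a ha
        exact (Finset.mem_filter.1 ha).2
      · intro a₁ ha₁ a₂ ha₂ hq
        apply Subtype.ext
        apply Subtype.ext
        have h₁ : (a₁.1.1.2 : ℕ) = i := a₁.2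
        have h₂ : (a₂.1.1.2 : ℕ) = i := a₂.2
        have : a₁.1.1.2 = a₂.1.1.2 := Fin.ext (h₁.trans h₂.symm)
        exact Prod.ext hq this
      · intro v hv
        refine ⟨⟨⟨(v, ⟨i, hi⟩), hvi v hv⟩, rfl⟩, ?_, rfl⟩
        simp [hE₀, hv]
    have hiff : ∀ σ, stepSucc (glue i σ τ) i ↔ ∀ a ∈ E₀, σ a = false := by
      intro σ
      unfold stepSucc
      constructor
      · rintro ⟨h, hall⟩ a ha
        obtain ⟨⟨⟨v, w⟩, hvw⟩, hw⟩ := a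
        have hv : v ∈ s := (Finset.mem_filter.1 ha).2
        have hwi : w = ⟨i, hi⟩ := Fin.ext hw
        subst hwi
        have := hall v (by rw [hgs σ]; exact hv)
        rwa [adjB_of_lt _ hvw, glue_pos σ τ ⟨⟨(v, ⟨i, hi⟩), hvw⟩, hw⟩] at this
      · intro hall
        refine ⟨hi, ?_⟩
        intro v hv
        rw [hgs σ] at hv
        have hvlt := hvi v hv
        rw [adjB_of_lt _ hvlt, glue_pos σ τ ⟨⟨(v, ⟨i, hi⟩), hvlt⟩, rfl⟩]
        apply hall
        simp [hE₀, hv]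
    have hFf : ∀ σ, Ff k i (glue i σ τ)
        = 1 - (1 - Real.exp (-1)) * (if ∀ a ∈ E₀, σ a = false then (1:ℝ) else 0) := by
      intro σ
      unfold Ff
      rw [if_congr (or_congr (by rw [hgs σ]) (hiff σ)) rfl rfl]
      have : ¬ (k ≤ s.card) := hks
      by_cases hcond : ∀ a ∈ E₀, σ a = false
      · rw [if_pos (Or.inr hcond), if_pos hcond]; ring
      · rw [if_neg (by tauto), if_neg hcond]; ring
    rw [Finset.sum_congr rfl fun σ _ => by rw [hFf σ]]
    have expand : ∀ σ : {e : EdgeIdx n // pd n i e} → Bool,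
        (∏ a, bw P (σ a)) * (1 - (1 - Real.exp (-1)) * (if ∀ a ∈ E₀, σ a = false then (1:ℝ) else 0))
        = (∏ a, bw P (σ a)) - (1 - Real.exp (-1)) *
            ((∏ a, bw P (σ a)) * (if ∀ a ∈ E₀, σ a = false then (1:ℝ) else 0)) := by
      intro σ; ring
    rw [Finset.sum_congr rfl fun σ _ => expand σ, Finset.sum_sub_distrib, ← Finset.mul_sum,
      sum_prod_bw, sum_bw_indicator, hcard]
    have hpow : (1-P)^k ≤ (1-P)^s.card :=
      pow_le_pow_of_le_one hP1 hP1' (le_of_not_ge hks)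
    nlinarith [hpow]

noncomputable def TT (n : ℕ) (P : ℝ) (k m : ℕ) : ℝ :=
  ∑ ω : EdgeIdx n → Bool, BW P ω * ∏ j ∈ Finset.range m, Ff k j ω

lemma TT_zero (n : ℕ) (P : ℝ) (k : ℕ) : TT n P k 0 = 1 := by
  unfold TT
  simp only [Finset.range_zero, Finset.prod_empty, mul_one]
  exact sum_prod_bw P

lemma step_bound {n : ℕ} {P : ℝ} (h0 : 0 ≤ P) (h1 : P ≤ 1) (k : ℕ) {i : ℕ} (hi : i < n) :
    TT n P k (i+1) ≤ (1 - (1 - Real.exp (-1)) * (1-P)^k) * TT n P k i := by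
  set Φ : ({e : EdgeIdx n // ¬ pd n i e} → Bool) → ℝ :=
    fun τ => ∏ j ∈ Finset.range i, Ff k j (glue i (fun _ => false) τ) with hΦ
  have hΦnn : ∀ τ, 0 ≤ Φ τ := fun τ => Finset.prod_nonneg fun j _ => (Ff_pos k j _).le
  have h2 : TT n P k (i+1) = ∑ τ, ((∏ b, bw P (τ b)) * Φ τ) *
      (∑ σ, (∏ a, bw P (σ a)) * Ff k i (glue i σ τ)) := by
    unfold TT
    rw [sum_glue i, Finset.sum_comm]
    apply Finset.sum_congr rfl
    intro τ _
    rw [Finset.mul_sum]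
    apply Finset.sum_congr rfl
    intro σ _
    rw [BW_glue, Finset.prod_range_succ, prefix_glue k σ (fun _ => false) τ]
    simp only [hΦ]
    ring
  have h3 : TT n P k i = ∑ τ, (∏ b, bw P (τ b)) * Φ τ := by
    unfold TT
    rw [sum_glue i, Finset.sum_comm]
    apply Finset.sum_congr rfl
    intro τ _
    have : ∀ σ : {e : EdgeIdx n // pd n i e} → Bool,
        BW P (glue i σ τ) * ∏ j ∈ Finset.range i, Ff k j (glue i σ τ)
          = (∏ a, bw P (σ a)) * ((∏ b, bw P (τ b)) * Φ τ) := by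
      intro σ
      rw [BW_glue, prefix_glue k σ (fun _ => false) τ]
      simp only [hΦ]
      ring
    rw [Finset.sum_congr rfl fun σ _ => this σ, ← Finset.sum_mul, sum_prod_bw, one_mul]
  rw [h2, h3, Finset.mul_sum]
  apply Finset.sum_le_sum
  intro τ _
  have hnn : 0 ≤ (∏ b, bw P (τ b)) * Φ τ :=
    mul_nonneg (Finset.prod_nonneg fun b _ => bw_nonneg h0 h1 _) (hΦnn τ)
  calc ((∏ b, bw P (τ b)) * Φ τ) * (∑ σ, (∏ a, bw P (σ a)) * Ff k i (glue i σ τ))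
      ≤ ((∏ b, bw P (τ b)) * Φ τ) * (1 - (1 - Real.exp (-1)) * (1-P)^k) :=
        mul_le_mul_of_nonneg_left (inner_bound h0 h1 k hi τ) hnn
    _ = (1 - (1 - Real.exp (-1)) * (1-P)^k) * ((∏ b, bw P (τ b)) * Φ τ) := by ring

lemma r_nonneg {P : ℝ} (h0 : 0 ≤ P) (h1 : P ≤ 1) (k : ℕ) :
    0 ≤ 1 - (1 - Real.exp (-1)) * (1-P)^k := by
  have hexp : Real.exp (-1) ≤ 1 := Real.exp_le_one_iff.2 (by norm_num)
  have hpow : (1-P)^k ≤ 1 := pow_le_one₀ (by linarith) (by linarith)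
  nlinarith [Real.exp_pos (-1 : ℝ)]

lemma TT_le {n : ℕ} {P : ℝ} (h0 : 0 ≤ P) (h1 : P ≤ 1) (k : ℕ) :
    ∀ m ≤ n, TT n P k m ≤ (1 - (1 - Real.exp (-1)) * (1-P)^k)^m := by
  intro m hm
  induction m with
  | zero => rw [TT_zero]; norm_num
  | succ m ih =>
    calc TT n P k (m+1) ≤ (1 - (1 - Real.exp (-1)) * (1-P)^k) * TT n P k m :=
          step_bound h0 h1 k (Nat.lt_of_succ_le hm)
      _ ≤ (1 - (1 - Real.exp (-1)) * (1-P)^k) * (1 - (1 - Real.exp (-1)) * (1-P)^k)^m :=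
          mul_le_mul_of_nonneg_left (ih (Nat.le_of_succ_le hm)) (r_nonneg h0 h1 k)
      _ = (1 - (1 - Real.exp (-1)) * (1-P)^k)^(m+1) := (pow_succ' _ _).symm

lemma sum_bad_le {n : ℕ} {P : ℝ} (h0 : 0 ≤ P) (h1 : P ≤ 1) (k : ℕ)
    (F : Finset (EdgeIdx n → Bool)) (hF : ∀ ω ∈ F, (greedy ω n).card < k) :
    ∑ ω ∈ F, BW P ω
      ≤ Real.exp ((k:ℝ) - 1) * (1 - (1 - Real.exp (-1)) * (1-P)^k)^n := by
  have key : ∀ ω ∈ F, BW P ω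
      ≤ Real.exp ((k:ℝ) - 1) * (BW P ω * ∏ j ∈ Finset.range n, Ff k j ω) := by
    intro ω hω
    have hprod : ∏ j ∈ Finset.range n, Ff k j ω
        = Real.exp (-((greedy ω n).card : ℝ)) := by
      have hFf : ∀ j ∈ Finset.range n, Ff k j ω
          = Real.exp (-(if stepSucc ω j then (1:ℝ) else 0)) := by
        intro j hj
        have hcle : (greedy ω j).card < k :=
          lt_of_le_of_lt (greedy_card_le ω (Finset.mem_range.1 hj).le) (hF ω hω)
        unfold Ff
        by_cases hs : stepSucc ω j
        · rw [if_pos (Or.inr hs), if_pos hs]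
        · rw [if_neg (by rintro (h | h); omega; exact hs h), if_neg hs, neg_zero,
            Real.exp_zero]
      rw [Finset.prod_congr rfl hFf, ← Real.exp_sum]
      congr 1
      rw [Finset.sum_neg_distrib, neg_inj, greedy_card_eq_sum ω n]
      push_cast
      apply Finset.sum_congr rfl
      intro j _
      split_ifs <;> norm_num
    rw [hprod]
    have hcard : ((greedy ω n).card : ℝ) + 1 ≤ (k:ℝ) := by
      exact_mod_cast hF ω hω
    have hble : (1:ℝ) ≤ Real.exp ((k:ℝ) - 1) * Real.exp (-((greedy ω n).card : ℝ)) := by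
      rw [← Real.exp_add]
      exact Real.one_le_exp (by linarith)
    have hBWnn := BW_nonneg h0 h1 ω
    calc BW P ω = BW P ω * 1 := (mul_one _).symm
      _ ≤ BW P ω * (Real.exp ((k:ℝ) - 1) * Real.exp (-((greedy ω n).card : ℝ))) :=
          mul_le_mul_of_nonneg_left hble hBWnn
      _ = Real.exp ((k:ℝ) - 1) * (BW P ω * Real.exp (-((greedy ω n).card : ℝ))) := by ring
  calc ∑ ω ∈ F, BW P ω
      ≤ ∑ ω ∈ F, Real.exp ((k:ℝ) - 1) * (BW P ω * ∏ j ∈ Finset.range n, Ff k j ω) :=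
        Finset.sum_le_sum key
    _ = Real.exp ((k:ℝ) - 1) * ∑ ω ∈ F, BW P ω * ∏ j ∈ Finset.range n, Ff k j ω := by
        rw [Finset.mul_sum]
    _ ≤ Real.exp ((k:ℝ) - 1) * ∑ ω : EdgeIdx n → Bool, BW P ω * ∏ j ∈ Finset.range n, Ff k j ω := by
        apply mul_le_mul_of_nonneg_left _ (Real.exp_pos _).le
        apply Finset.sum_le_sum_of_subset_of_nonneg (Finset.subset_univ F)
        intro ω _ _
        exact mul_nonneg (BW_nonneg h0 h1 ω)
          (Finset.prod_nonneg fun j _ => (Ff_pos k j ω).le)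
    _ ≤ Real.exp ((k:ℝ) - 1) * (1 - (1 - Real.exp (-1)) * (1-P)^k)^n :=
        mul_le_mul_of_nonneg_left (TT_le h0 h1 k n (le_refl n)) (Real.exp_pos _).le

instance (n : ℕ) (p : ℝ) : IsProbabilityMeasure (gnp n p) := by
  unfold gnp; infer_instance

lemma prob_bound {n : ℕ} {p : ℝ} (h0 : 0 ≤ p) (h1 : p ≤ 1) (k : ℕ) :
    (gnp n p {ω | sampleIndepNum n ω < k}).toReal
      ≤ Real.exp ((k:ℝ) - 1) * (1 - (1 - Real.exp (-1)) * (1-p)^k)^n := by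
  rw [gnp_apply h0 h1,
    ENNReal.toReal_ofReal (Finset.sum_nonneg fun ω _ => BW_nonneg h0 h1 ω)]
  apply sum_bad_le h0 h1 k
  intro ω hω
  have hmem : sampleIndepNum n ω < k := by
    simpa using (Set.Finite.mem_toFinset _).1 hω
  exact lt_of_le_of_lt (greedy_card_le_indep n ω) hmem

lemma one_sub_ge_exp_neg_two {x : ℝ} (h0 : 0 ≤ x) (h1 : x ≤ 1/2) :
    Real.exp (-(2*x)) ≤ 1 - x := by
  have h2 : 1 + 2*x ≤ Real.exp (2*x) := by linarith [Real.add_one_le_exp (2*x)]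
  have hpos : (0:ℝ) < 1 + 2*x := by linarith
  rw [Real.exp_neg]
  have hinv : (Real.exp (2*x))⁻¹ ≤ (1 + 2*x)⁻¹ := inv_anti₀ hpos h2
  apply hinv.trans
  rw [inv_le_iff_one_le_mul₀ hpos]
  nlinarith


/-- There exists a constant `C > 0` such that with high probability the
independence number of `G(n, (3γ·ln n)/(4n))` is at least `C·n·ln(ln n)/ln n`. -/
theorem indep_num_sparse_whp (γ : ℝ) (hγ : 0 < γ) :
    ∃ C : ℝ, 0 < C ∧
      Tendsto (fun n : ℕ =>
          ((gnp n (3 * γ * Real.log n / (4 * n)))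
            {ω | C * n * Real.log (Real.log n) / Real.log n ≤ (sampleIndepNum n ω : ℝ)}).toReal)
        atTop (nhds 1) := by
  have hexp1 : Real.exp (-1) < 1 := Real.exp_lt_one_iff.2 (by norm_num)
  set c₀ : ℝ := 1 - Real.exp (-1) with hc₀
  have hc₀pos : 0 < c₀ := by simp only [hc₀]; linarith
  set c : ℝ := c₀ * Real.exp (-2) with hc
  have hcpos : 0 < c := mul_pos hc₀pos (Real.exp_pos _)
  set C : ℝ := min 1 (1/(3*γ)) with hCdef
  have hCpos : 0 < C := lt_min one_pos (by positivity)
  have h3γC : 3*γ*C ≤ 1 := by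
    have h1 : C ≤ 1/(3*γ) := min_le_right _ _
    have h3 : (0:ℝ) < 3*γ := by linarith
    calc 3*γ*C ≤ 3*γ*(1/(3*γ)) := mul_le_mul_of_nonneg_left h1 h3.le
      _ = 1 := by field_simp
  refine ⟨C, hCpos, ?_⟩
  set p : ℕ → ℝ := fun n => 3*γ*Real.log n/(4*n) with hp
  set K : ℕ → ℕ := fun n => ⌈C * n * Real.log (Real.log n) / Real.log n⌉₊ with hK
  set δ : ℕ → ℝ := fun n =>
    Real.exp ((K n : ℝ) - 1 - n * (c₀ * (1 - p n)^(K n))) with hδ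
  -- eventual basic facts
  have hlogT : Tendsto (fun n : ℕ => Real.log n) atTop atTop :=
    Real.tendsto_log_atTop.comp tendsto_natCast_atTop_atTop
  have hlog1 : ∀ᶠ n : ℕ in atTop, 1 ≤ Real.log n := hlogT.eventually_ge_atTop 1
  have hn1 : ∀ᶠ n : ℕ in atTop, 1 ≤ n := eventually_ge_atTop 1
  have hlogdiv : Tendsto (fun n : ℕ => Real.log n / (n:ℝ)) atTop (nhds 0) := by
    have h := (isLittleO_log_rpow_atTop one_pos).tendsto_div_nhds_zero
    have h2 : Tendsto (fun x : ℝ => Real.log x / x) atTop (nhds 0) := by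
      apply h.congr'
      filter_upwards [eventually_gt_atTop (0:ℝ)] with x hx
      rw [Real.rpow_one]
    exact h2.comp tendsto_natCast_atTop_atTop
  have hpT : Tendsto p atTop (nhds 0) := by
    have : p = fun n : ℕ => (3*γ/4) * (Real.log n / n) := by
      funext n; simp only [hp]; ring
    rw [this]
    simpa using hlogdiv.const_mul (3*γ/4)
  have hp_half : ∀ᶠ n : ℕ in atTop, p n ≤ 1/2 :=
    (hpT.eventually (gt_mem_nhds (by norm_num : (0:ℝ) < 1/2))).mono fun n h => le_of_lt h
  have hp0 : ∀ᶠ n : ℕ in atTop, 0 ≤ p n := by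
    filter_upwards [hlog1, hn1] with n hL hn
    have : (0:ℝ) < n := by exact_mod_cast hn
    simp only [hp]
    positivity
  have hLLS : Tendsto (fun n : ℕ => Real.log (Real.log n) / (Real.log n)^(1/2:ℝ))
      atTop (nhds 0) := by
    have h := (isLittleO_log_rpow_atTop (by norm_num : (0:ℝ) < 1/2)).tendsto_div_nhds_zero
    exact h.comp hlogT
  have hLLc : ∀ᶠ n : ℕ in atTop,
      C * (Real.log (Real.log n) / (Real.log n)^(1/2:ℝ)) ≤ c/2 := by
    have hCLL : Tendsto (fun n : ℕ =>
        C * (Real.log (Real.log n) / (Real.log n)^(1/2:ℝ))) atTop (nhds 0) := by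
      simpa using hLLS.const_mul C
    exact (hCLL.eventually (gt_mem_nhds (by positivity : (0:ℝ) < c/2))).mono
      fun n h => le_of_lt h
  -- the bound on the exponent
  have hn_div : Tendsto (fun n : ℕ => -(c/2) * ((n:ℝ) / (Real.log n)^(1/2:ℝ))) atTop atBot := by
    rw [tendsto_const_mul_atBot_of_neg (by linarith : -(c/2) < 0)]
    have hbase : Tendsto (fun n : ℕ => (n:ℝ)^(1/2:ℝ)) atTop atTop :=
      (tendsto_rpow_atTop (by norm_num : (0:ℝ) < 1/2)).comp tendsto_natCast_atTop_atTop
    apply tendsto_atTop_mono' atTop ?_ hbase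
    filter_upwards [hlog1, hn1] with n hL hn
    have hnpos : (0:ℝ) < n := by exact_mod_cast hn
    have hLpos : (0:ℝ) < Real.log n := by linarith
    have hLn : Real.log n ≤ (n:ℝ) := by
      linarith [Real.log_le_sub_one_of_pos hnpos]
    have hSle : (Real.log n)^(1/2:ℝ) ≤ (n:ℝ)^(1/2:ℝ) :=
      Real.rpow_le_rpow hLpos.le hLn (by norm_num)
    have hSpos : (0:ℝ) < (Real.log n)^(1/2:ℝ) := Real.rpow_pos_of_pos hLpos _
    have hnS : (0:ℝ) < (n:ℝ)^(1/2:ℝ) := Real.rpow_pos_of_pos hnpos _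
    have hid : (n:ℝ) / (n:ℝ)^(1/2:ℝ) = (n:ℝ)^(1/2:ℝ) := by
      rw [eq_comm, eq_div_iff hnS.ne', ← Real.rpow_add hnpos]
      norm_num
    calc (n:ℝ)^(1/2:ℝ) = (n:ℝ) / (n:ℝ)^(1/2:ℝ) := hid.symm
      _ ≤ (n:ℝ) / (Real.log n)^(1/2:ℝ) :=
          div_le_div_of_nonneg_left hnpos.le hSpos hSle
  have hE : ∀ᶠ n : ℕ in atTop, (K n : ℝ) - 1 - n * (c₀ * (1 - p n)^(K n))
      ≤ -(c/2) * ((n:ℝ) / (Real.log n)^(1/2:ℝ)) := by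
    filter_upwards [hlog1, hn1, hp0, hp_half, hLLc] with n hL hn h0 hhalf hLc
    have hnpos : (0:ℝ) < n := by exact_mod_cast hn
    set L := Real.log n with hLdef
    set LL := Real.log L with hLLdef
    set S := L^(1/2:ℝ) with hSdef
    have hLpos : (0:ℝ) < L := by linarith
    have hSpos : (0:ℝ) < S := Real.rpow_pos_of_pos hLpos _
    have hSS : S * S = L := by
      rw [hSdef, ← Real.rpow_add hLpos]; norm_num
    have hLL0 : 0 ≤ LL := Real.log_nonneg hL
    have hKle : (K n : ℝ) ≤ C * n * LL / L + 1 := by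
      simp only [hK]
      exact le_of_lt (Nat.ceil_lt_add_one (by positivity))
    have hpK : p n * K n ≤ (1/4)*LL + 1 := by
      have step1 : p n * K n ≤ p n * (C * n * LL / L + 1) :=
        mul_le_mul_of_nonneg_left hKle h0
      have step2 : p n * (C * n * LL / L + 1) = (3*γ*C/4)*LL + p n := by
        simp only [hp]
        field_simp
        ring
      have step3 : (3*γ*C/4)*LL ≤ (1/4)*LL := by
        have := mul_le_mul_of_nonneg_right h3γC hLL0
        linarith
      linarith
    have hpow : Real.exp (-2) * S⁻¹ ≤ (1 - p n)^(K n) := by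
      have e1 : Real.exp (-(2 * p n))^(K n) ≤ (1 - p n)^(K n) :=
        pow_le_pow_left₀ (Real.exp_nonneg _) (one_sub_ge_exp_neg_two h0 hhalf) _
      have e2 : Real.exp (-(2 * p n))^(K n) = Real.exp ((K n : ℝ) * (-(2 * p n))) :=
        (Real.exp_nat_mul _ _).symm
      have e3 : Real.exp (-2) * S⁻¹ = Real.exp (-2 - LL * (1/2)) := by
        have : S = Real.exp (LL * (1/2)) := by
          rw [hSdef, Real.rpow_def_of_pos hLpos]
        rw [this, ← Real.exp_neg, ← Real.exp_add]
        ring_nf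
      have e4 : -2 - LL * (1/2) ≤ (K n : ℝ) * (-(2 * p n)) := by
        have : (K n : ℝ) * (2 * p n) = 2 * (p n * K n) := by ring
        nlinarith
      calc Real.exp (-2) * S⁻¹ = Real.exp (-2 - LL * (1/2)) := e3
        _ ≤ Real.exp ((K n : ℝ) * (-(2 * p n))) := Real.exp_le_exp.2 e4
        _ = Real.exp (-(2 * p n))^(K n) := Real.exp_nat_mul _ _
        _ ≤ (1 - p n)^(K n) := e1
    have hmul : (n:ℝ) * (c₀ * (Real.exp (-2) * S⁻¹)) ≤ n * (c₀ * (1 - p n)^(K n)) := by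
      apply mul_le_mul_of_nonneg_left _ hnpos.le
      exact mul_le_mul_of_nonneg_left hpow hc₀pos.le
    have hid : (n:ℝ) * (c₀ * (Real.exp (-2) * S⁻¹)) = c * ((n:ℝ)/S) := by
      rw [hc]; field_simp
    have hsplit : C * n * LL / L = ((n:ℝ)/S) * (C * (LL/S)) := by
      rw [← hSS]; field_simp
    have hnS0 : 0 ≤ (n:ℝ)/S := by positivity
    have hfin : ((n:ℝ)/S) * (C * (LL/S)) ≤ ((n:ℝ)/S) * (c/2) := by
      apply mul_le_mul_of_nonneg_left _ hnS0
      calc C * (LL/S) = C * (LL/S) := rfl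
        _ ≤ c/2 := hLc
    have : (K n : ℝ) - 1 - n * (c₀ * (1 - p n)^(K n))
        ≤ (C * n * LL / L + 1) - 1 - c * ((n:ℝ)/S) := by
      rw [← hid]
      linarith
    calc (K n : ℝ) - 1 - n * (c₀ * (1 - p n)^(K n))
        ≤ (C * n * LL / L + 1) - 1 - c * ((n:ℝ)/S) := this
      _ = ((n:ℝ)/S) * (C * (LL/S)) - c * ((n:ℝ)/S) := by rw [hsplit]; ring
      _ ≤ ((n:ℝ)/S) * (c/2) - c * ((n:ℝ)/S) := by linarith
      _ = -(c/2) * ((n:ℝ)/S) := by ring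
  have hδ0 : Tendsto δ atTop (nhds 0) := by
    have hEb : Tendsto (fun n : ℕ => (K n : ℝ) - 1 - n * (c₀ * (1 - p n)^(K n))) atTop atBot :=
      tendsto_atBot_mono' atTop hE hn_div
    exact Real.tendsto_exp_atBot.comp hEb
  -- the per-n probability lower bound
  have hprob : ∀ᶠ n : ℕ in atTop,
      1 - δ n ≤ ((gnp n (3 * γ * Real.log n / (4 * n)))
        {ω | C * n * Real.log (Real.log n) / Real.log n ≤ (sampleIndepNum n ω : ℝ)}).toReal := by
    filter_upwards [hp0, hp_half] with n h0 hhalf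
    have h1 : p n ≤ 1 := by linarith
    have hpn : p n = 3 * γ * Real.log n / (4 * n) := rfl
    rw [← hpn]
    set μ := gnp n (p n) with hμ
    set A : Set (EdgeIdx n → Bool) :=
      {ω | C * n * Real.log (Real.log n) / Real.log n ≤ (sampleIndepNum n ω : ℝ)} with hA
    have hsub : Aᶜ ⊆ {ω | sampleIndepNum n ω < K n} := by
      intro ω hω
      simp only [hA, Set.mem_compl_iff, Set.mem_setOf_eq, not_le] at hω
      simp only [Set.mem_setOf_eq]
      by_contra hcon
      push_neg at hcon
      have h2 : (K n : ℝ) ≤ (sampleIndepNum n ω : ℝ) := by exact_mod_cast hcon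
      have h3 : C * n * Real.log (Real.log n) / Real.log n ≤ (K n : ℝ) := Nat.le_ceil _
      linarith
    have hbound : (μ Aᶜ).toReal ≤ δ n := by
      have hb1 : (μ Aᶜ).toReal ≤ (μ {ω | sampleIndepNum n ω < K n}).toReal :=
        ENNReal.toReal_mono (measure_ne_top μ _) (measure_mono hsub)
      have hb2 : (μ {ω | sampleIndepNum n ω < K n}).toReal
          ≤ Real.exp ((K n : ℝ) - 1) * (1 - c₀ * (1 - p n)^(K n))^n := by
        have := prob_bound (n := n) h0 h1 (K n)
        rw [← hc₀] at this
        exact this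
      have hr0 : 0 ≤ 1 - c₀ * (1 - p n)^(K n) := by
        have := r_nonneg h0 h1 (K n)
        rwa [← hc₀] at this
      have hb3 : (1 - c₀ * (1 - p n)^(K n))^n
          ≤ Real.exp (-(c₀ * (1 - p n)^(K n)))^n := by
        apply pow_le_pow_left₀ hr0
        have := Real.add_one_le_exp (-(c₀ * (1 - p n)^(K n)))
        linarith
      have hb4 : Real.exp ((K n : ℝ) - 1) * Real.exp (-(c₀ * (1 - p n)^(K n)))^n = δ n := by
        rw [← Real.exp_nat_mul, ← Real.exp_add, hδ]
        congr 1
        ring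
      calc (μ Aᶜ).toReal ≤ Real.exp ((K n : ℝ) - 1) *
            (1 - c₀ * (1 - p n)^(K n))^n := hb1.trans hb2
        _ ≤ Real.exp ((K n : ℝ) - 1) * Real.exp (-(c₀ * (1 - p n)^(K n)))^n :=
            mul_le_mul_of_nonneg_left hb3 (Real.exp_pos _).le
        _ = δ n := hb4
    have hcompl : (μ A).toReal + (μ Aᶜ).toReal = 1 := by
      rw [← ENNReal.toReal_add (measure_ne_top μ _) (measure_ne_top μ _),
        measure_add_measure_compl (meas_all A), measure_univ]
      exact ENNReal.toReal_one
    linarith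
  have hle1 : ∀ n : ℕ, ((gnp n (3 * γ * Real.log n / (4 * n)))
      {ω | C * n * Real.log (Real.log n) / Real.log n ≤ (sampleIndepNum n ω : ℝ)}).toReal ≤ 1 := by
    intro n
    have h := prob_le_one (μ := gnp n (3 * γ * Real.log n / (4 * n)))
      (s := {ω | C * n * Real.log (Real.log n) / Real.log n ≤ (sampleIndepNum n ω : ℝ)})
    have h2 := ENNReal.toReal_mono ENNReal.one_ne_top h
    simpa using h2
  have hlower : Tendsto (fun n => 1 - δ n) atTop (nhds 1) := by
    have := tendsto_const_nhds (x := (1:ℝ)) (f := atTop (α := ℕ)) |>.sub hδ0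
    simpa using this
  exact tendsto_of_tendsto_of_tendsto_of_le_of_le' hlower tendsto_const_nhds hprob
    (Eventually.of_forall hle1)
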